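/- Let n, k be integers with 3 ≤ k ≤ n-1 and n coprime-part condition as follows: with n' the largest divisor of n(n-k) coprime to k! and d = gcd(k, {ν_p(n') : p | n'}), assume d = 1. Then for every choice of nonzero integers a_0, …, a_k each having all prime factors ≤ k, the polynomial F_{n,k}(x) = ∑_{j=0}^{k} a_j c_j x^j with c_j = (-1)^{k-j} C(n,j) C(n-j-1,k-j) is irreducible over ℚ. -/

import Mathlib

open Finset Polynomial

open Finset
-- sum of terms all of valuation > v
lemma val_sum_gt {p : ℕ} [hp : Fact p.Prime] {ι : Type*} [DecidableEq ι] (v : ℤ) (f : ι → ℚ)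
    (S : Finset ι) (h : ∀ i ∈ S, f i ≠ 0 → v < padicValRat p (f i)) :
    (∑ i ∈ S, f i) = 0 ∨ ((∑ i ∈ S, f i) ≠ 0 ∧ v < padicValRat p (∑ i ∈ S, f i)) := by
  classical
  induction S using Finset.induction with
  | empty => simp
  | @insert x T hx ih =>
    rw [Finset.sum_insert hx]
    have hT := ih (fun i hi hne => h i (Finset.mem_insert_of_mem hi) hne)
    by_cases hfx : f x = 0
    · simpa [hfx] using hT
    · have hvx := h x (Finset.mem_insert_self x T) hfx
      rcases hT with h0 | ⟨hne, hv⟩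
      · right; simpa [h0, hfx] using And.intro hfx hvx
      · by_cases hs : f x + ∑ i ∈ T, f i = 0
        · left; exact hs
        · right
          exact ⟨hs, lt_of_lt_of_le (lt_min hvx hv) (padicValRat.min_le_padicValRat_add hs)⟩

lemma val_sum_eq {p : ℕ} [hp : Fact p.Prime] {ι : Type*} [DecidableEq ι] (f : ι → ℚ)
    (S : Finset ι) (i0 : ι) (hi0 : i0 ∈ S) (h0 : f i0 ≠ 0)
    (h : ∀ i ∈ S, i ≠ i0 → f i ≠ 0 → padicValRat p (f i0) < padicValRat p (f i)) :
    (∑ i ∈ S, f i) ≠ 0 ∧ padicValRat p (∑ i ∈ S, f i) = padicValRat p (f i0) := by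
  classical
  rw [← Finset.add_sum_erase S f hi0]
  have hrest := val_sum_gt (p := p) (padicValRat p (f i0)) f (S.erase i0)
    (fun i hi hne => h i (Finset.mem_of_mem_erase hi) (Finset.ne_of_mem_erase hi) hne)
  rcases hrest with hz | ⟨hne, hv⟩
  · simp [hz, h0]
  · have hs : f i0 + ∑ i ∈ S.erase i0, f i ≠ 0 := by
      intro hcontra
      have : padicValRat p (f i0) = padicValRat p (-(∑ i ∈ S.erase i0, f i)) := by
        rw [← eq_neg_of_add_eq_zero_left hcontra]
      rw [padicValRat.neg] at this
      omega
    exact ⟨hs, padicValRat.add_eq_of_lt hs h0 hne hv⟩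

open Finset Polynomial

lemma key_min {p : ℕ} [hp : Fact p.Prime] (c s : ℤ) (hc : 0 < c) (G H : Polynomial ℚ)
    (h0 : (G * H).coeff 0 ≠ 0)
    (hmin : ∀ i ∈ (G * H).support,
      c * padicValRat p ((G * H).coeff 0) ≤ c * padicValRat p ((G * H).coeff i) + s * i) :
    ∀ i ∈ G.support, c * padicValRat p (G.coeff 0) ≤ c * padicValRat p (G.coeff i) + s * i := by
  classical
  have hg0 : G.coeff 0 ≠ 0 := fun h => h0 (by rw [Polynomial.mul_coeff_zero, h, zero_mul])
  have hh0 : H.coeff 0 ≠ 0 := fun h => h0 (by rw [Polynomial.mul_coeff_zero, h, mul_zero])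
  have hGne : G.support.Nonempty := Polynomial.nonempty_support_iff.mpr
    (fun h => hg0 (by rw [h]; simp))
  have hHne : H.support.Nonempty := Polynomial.nonempty_support_iff.mpr
    (fun h => hh0 (by rw [h]; simp))
  obtain ⟨MG, fG, hfGmem, hfG2, hMGle, hGstrict⟩ :
      ∃ (M : ℤ) (f : ℕ), f ∈ G.support ∧ c * padicValRat p (G.coeff f) + s * f = M ∧
        (∀ i ∈ G.support, M ≤ c * padicValRat p (G.coeff i) + s * i) ∧
        (∀ i ∈ G.support, i < f → M < c * padicValRat p (G.coeff i) + s * i) := by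
    set B : ℕ → ℤ := fun i => c * padicValRat p (G.coeff i) + s * i with hB
    have hTne : (G.support.filter (fun i => B i = G.support.inf' hGne B)).Nonempty := by
      obtain ⟨i, hi, hieq⟩ := Finset.exists_mem_eq_inf' hGne B
      exact ⟨i, Finset.mem_filter.mpr ⟨hi, hieq.symm⟩⟩
    set f := (G.support.filter (fun i => B i = G.support.inf' hGne B)).min' hTne with hf
    have hfmem := Finset.mem_filter.mp
      ((G.support.filter (fun i => B i = G.support.inf' hGne B)).min'_mem hTne)
    refine ⟨G.support.inf' hGne B, f, hfmem.1, hfmem.2, fun i hi => Finset.inf'_le _ hi, ?_⟩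
    intro i hi hlt
    refine lt_of_le_of_ne (Finset.inf'_le _ hi) (fun heq => ?_)
    have hle : f ≤ i := Finset.min'_le _ i (Finset.mem_filter.mpr ⟨hi, heq.symm⟩)
    omega
  obtain ⟨MH, fH, hfHmem, hfH2, hMHle, hHstrict⟩ :
      ∃ (M : ℤ) (f : ℕ), f ∈ H.support ∧ c * padicValRat p (H.coeff f) + s * f = M ∧
        (∀ i ∈ H.support, M ≤ c * padicValRat p (H.coeff i) + s * i) ∧
        (∀ i ∈ H.support, i < f → M < c * padicValRat p (H.coeff i) + s * i) := by
    set B : ℕ → ℤ := fun i => c * padicValRat p (H.coeff i) + s * i with hB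
    have hTne : (H.support.filter (fun i => B i = H.support.inf' hHne B)).Nonempty := by
      obtain ⟨i, hi, hieq⟩ := Finset.exists_mem_eq_inf' hHne B
      exact ⟨i, Finset.mem_filter.mpr ⟨hi, hieq.symm⟩⟩
    set f := (H.support.filter (fun i => B i = H.support.inf' hHne B)).min' hTne with hf
    have hfmem := Finset.mem_filter.mp
      ((H.support.filter (fun i => B i = H.support.inf' hHne B)).min'_mem hTne)
    refine ⟨H.support.inf' hHne B, f, hfmem.1, hfmem.2, fun i hi => Finset.inf'_le _ hi, ?_⟩
    intro i hi hlt
    refine lt_of_le_of_ne (Finset.inf'_le _ hi) (fun heq => ?_)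
    have hle : f ≤ i := Finset.min'_le _ i (Finset.mem_filter.mpr ⟨hi, heq.symm⟩)
    omega
  have hgfG : G.coeff fG ≠ 0 := Polynomial.mem_support_iff.mp hfGmem
  have hhfH : H.coeff fH ≠ 0 := Polynomial.mem_support_iff.mp hfHmem
  have hmain_ne : G.coeff fG * H.coeff fH ≠ 0 := mul_ne_zero hgfG hhfH
  have hval := val_sum_eq (p := p) (fun x : ℕ × ℕ => G.coeff x.1 * H.coeff x.2)
    (Finset.HasAntidiagonal.antidiagonal (fG + fH)) (fG, fH) (Finset.HasAntidiagonal.mem_antidiagonal.mpr rfl) hmain_ne ?_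
  · have hcoefft : (G * H).coeff (fG + fH)
        = ∑ x ∈ Finset.HasAntidiagonal.antidiagonal (fG + fH), G.coeff x.1 * H.coeff x.2 :=
      Polynomial.coeff_mul G H (fG + fH)
    have htmem : (fG + fH) ∈ (G * H).support := Polynomial.mem_support_iff.mpr
      (by rw [hcoefft]; exact hval.1)
    have hvt : padicValRat p ((G * H).coeff (fG + fH)) =
        padicValRat p (G.coeff fG) + padicValRat p (H.coeff fH) := by
      rw [hcoefft, hval.2]
      exact padicValRat.mul hgfG hhfH
    have h1 := hmin (fG + fH) htmem
    rw [hvt] at h1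
    have h1' : c * padicValRat p ((G * H).coeff 0) ≤
        c * padicValRat p (G.coeff fG) + c * padicValRat p (H.coeff fH)
          + (s * fG + s * fH) := by
      push_cast at h1 ⊢
      linarith [h1]
    have h2 : c * padicValRat p ((G * H).coeff 0) =
        c * padicValRat p (G.coeff 0) + c * padicValRat p (H.coeff 0) := by
      rw [Polynomial.mul_coeff_zero, padicValRat.mul hg0 hh0, mul_add]
    have h3 : MG ≤ c * padicValRat p (G.coeff 0) := by
      have := hMGle 0 (Polynomial.mem_support_iff.mpr hg0)
      simpa using this
    have h4 : MH ≤ c * padicValRat p (H.coeff 0) := by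
      have := hMHle 0 (Polynomial.mem_support_iff.mpr hh0)
      simpa using this
    have hAG0 : c * padicValRat p (G.coeff 0) = MG := by linarith
    intro i hi
    have h6 := hMGle i hi
    linarith
  · rintro ⟨x1, x2⟩ hx hne hxne0
    have hx12 : x1 + x2 = fG + fH := Finset.HasAntidiagonal.mem_antidiagonal.mp hx
    simp only at hxne0 ⊢
    have hgx1 : G.coeff x1 ≠ 0 := fun h => hxne0 (by simp [h])
    have hhx2 : H.coeff x2 ≠ 0 := fun h => hxne0 (by simp [h])
    rw [padicValRat.mul hgx1 hhx2, padicValRat.mul hgfG hhfH]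
    have hAx1 : MG ≤ c * padicValRat p (G.coeff x1) + s * x1 :=
      hMGle x1 (Polynomial.mem_support_iff.mpr hgx1)
    have hAx2 : MH ≤ c * padicValRat p (H.coeff x2) + s * x2 :=
      hMHle x2 (Polynomial.mem_support_iff.mpr hhx2)
    have hcast2 : s * (x1 : ℤ) + s * (x2 : ℤ) = s * (fG : ℤ) + s * (fH : ℤ) := by
      linear_combination s * (by exact_mod_cast congrArg (Nat.cast : ℕ → ℤ) hx12 :
        (x1 : ℤ) + (x2 : ℤ) = (fG : ℤ) + (fH : ℤ))
    have hcases : x1 < fG ∨ x2 < fH := by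
      rcases Nat.lt_trichotomy x1 fG with h | h | h
      · exact Or.inl h
      · exact absurd (by subst h; exact Prod.ext rfl (by omega)) hne
      · right; omega
    refine lt_of_mul_lt_mul_left ?_ (le_of_lt hc)
    rw [mul_add, mul_add]
    rcases hcases with h | h
    · have h5 := hGstrict x1 (Polynomial.mem_support_iff.mpr hgx1) h
      linarith
    · have h5 := hHstrict x2 (Polynomial.mem_support_iff.mpr hhx2) h
      linarith

open Finset Polynomial

lemma key_dvd {p : ℕ} [hp : Fact p.Prime] (k : ℕ) (s : ℤ) (G H : Polynomial ℚ)
    (hk : 0 < k) (hdeg : (G * H).natDegree = k) (h0 : (G * H).coeff 0 ≠ 0)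
    (hmin : ∀ i ∈ (G * H).support,
      (k:ℤ) * padicValRat p ((G*H).coeff 0) ≤ (k:ℤ) * padicValRat p ((G*H).coeff i) + s * i)
    (hmax : ∀ i ∈ (G * H).support,
      (k:ℤ) * padicValRat p ((G*H).coeff k) + s * k ≤
        (k:ℤ) * padicValRat p ((G*H).coeff i) + s * i) :
    (k:ℤ) ∣ s * G.natDegree := by
  have hkz : (0:ℤ) < k := by exact_mod_cast hk
  have hg0 : G.coeff 0 ≠ 0 := fun h => h0 (by rw [Polynomial.mul_coeff_zero, h, zero_mul])
  have hGne : G ≠ 0 := fun h => hg0 (by rw [h]; simp)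
  have hFne : G * H ≠ 0 := fun h => h0 (by rw [h]; simp)
  have hfirst := key_min (p := p) (k : ℤ) s hkz G H h0 hmin
  set m := G.natDegree with hm
  have hgm : G.coeff m ≠ 0 := by
    rw [hm, ← Polynomial.leadingCoeff]
    exact Polynomial.leadingCoeff_ne_zero.mpr hGne
  have h1 := hfirst m (Polynomial.mem_support_iff.mpr hgm)
  -- reversed
  have hrev : G.reverse * H.reverse = (G * H).reverse := (Polynomial.reverse_mul_of_domain G H).symm
  have h0' : (G.reverse * H.reverse).coeff 0 ≠ 0 := by
    rw [hrev, Polynomial.coeff_zero_reverse]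
    exact Polynomial.leadingCoeff_ne_zero.mpr hFne
  have hmin' : ∀ i ∈ (G.reverse * H.reverse).support,
      (k:ℤ) * padicValRat p ((G.reverse * H.reverse).coeff 0) ≤
        (k:ℤ) * padicValRat p ((G.reverse * H.reverse).coeff i) + (-s) * i := by
    intro i hi
    rw [hrev] at hi ⊢
    have hile : i ≤ k := by
      have e1 : i ≤ (G*H).reverse.natDegree :=
        Polynomial.le_natDegree_of_ne_zero (Polynomial.mem_support_iff.mp hi)
      have e2 := Polynomial.reverse_natDegree_le (G*H)
      omega
    have hco : (G*H).reverse.coeff i = (G*H).coeff (k - i) := by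
      rw [Polynomial.coeff_reverse, Polynomial.revAt_le (by omega : i ≤ (G*H).natDegree), hdeg]
    have hco0 : (G*H).reverse.coeff 0 = (G*H).coeff k := by
      rw [Polynomial.coeff_zero_reverse, Polynomial.leadingCoeff, hdeg]
    have hkimem : k - i ∈ (G*H).support := by
      rw [Polynomial.mem_support_iff, ← hco]
      exact Polynomial.mem_support_iff.mp hi
    have h2 := hmax (k - i) hkimem
    rw [hco, hco0]
    have hcast : ((k - i : ℕ) : ℤ) = (k : ℤ) - (i : ℤ) := by omega
    rw [hcast] at h2
    linarith
  have hsecond := key_min (p := p) (k : ℤ) (-s) hkz G.reverse H.reverse h0' hmin'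
  have hrevG0 : G.reverse.coeff 0 = G.coeff m := by
    rw [Polynomial.coeff_zero_reverse, Polynomial.leadingCoeff, hm]
  have hrevGm : G.reverse.coeff m = G.coeff 0 := by
    rw [Polynomial.coeff_reverse, ← hm, Polynomial.revAt_le (le_refl m), Nat.sub_self]
  have hmmem : m ∈ G.reverse.support := by
    rw [Polynomial.mem_support_iff, hrevGm]; exact hg0
  have h3 := hsecond m hmmem
  rw [hrevG0, hrevGm] at h3
  exact ⟨padicValRat p (G.coeff 0) - padicValRat p (G.coeff m), by linarith⟩

open Finset

lemma padicValNat_prod {p : ℕ} [hp : Fact p.Prime] {ι : Type*} (S : Finset ι) (f : ι → ℕ)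
    (h : ∀ i ∈ S, f i ≠ 0) :
    padicValNat p (∏ i ∈ S, f i) = ∑ i ∈ S, padicValNat p (f i) := by
  classical
  induction S using Finset.induction with
  | empty => simp
  | @insert x T hx ih =>
    rw [Finset.prod_insert hx, Finset.sum_insert hx,
      padicValNat.mul (h x (Finset.mem_insert_self _ _))
        (Finset.prod_ne_zero_iff.mpr (fun i hi => h i (Finset.mem_insert_of_mem hi))),
      ih (fun i hi => h i (Finset.mem_insert_of_mem hi))]

lemma val_choose_eq_sum {p : ℕ} [hp : Fact p.Prime] {N r : ℕ} (hrp : r < p) (hrN : r ≤ N) :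
    padicValNat p (N.choose r) = ∑ i ∈ Finset.range r, padicValNat p (N - i) := by
  have h1 : N.descFactorial r = Nat.factorial r * N.choose r := Nat.descFactorial_eq_factorial_mul_choose N r
  have hfact : padicValNat p (Nat.factorial r) = 0 :=
    padicValNat.eq_zero_of_not_dvd
      (fun hd => absurd ((Nat.Prime.dvd_factorial hp.out).mp hd) (by omega))
  have hch : N.choose r ≠ 0 := (Nat.choose_pos hrN).ne'
  have h2 : padicValNat p (N.descFactorial r) = padicValNat p (N.choose r) := by
    rw [h1, padicValNat.mul (Nat.factorial_ne_zero r) hch, hfact, zero_add]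
  rw [← h2, Nat.descFactorial_eq_prod_range,
    padicValNat_prod _ _ (fun i hi => by
      have := Finset.mem_range.mp hi; omega)]

section vals
variable {p k n : ℕ} [hp : Fact p.Prime] (hpk : k < p) (hn : k + 1 ≤ n)

include hpk hn

lemma val_N1 (hdvd : p ∣ n) {j : ℕ} (hj1 : 1 ≤ j) (hjk : j ≤ k) :
    padicValNat p (n.choose j) = padicValNat p n := by
  rw [val_choose_eq_sum (by omega) (by omega)]
  rw [Finset.sum_eq_single_of_mem 0 (Finset.mem_range.mpr (by omega))]
  · rw [Nat.sub_zero]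
  · intro i hi hine
    have hir := Finset.mem_range.mp hi
    refine padicValNat.eq_zero_of_not_dvd (fun hd => ?_)
    have h3 : p ∣ n - (n - i) := Nat.dvd_sub hdvd hd
    rw [Nat.sub_sub_self (by omega)] at h3
    exact absurd (Nat.le_of_dvd (by omega) h3) (by omega)

lemma val_N2 (hdvd : p ∣ n) {j : ℕ} (hjk : j ≤ k) :
    padicValNat p ((n - j - 1).choose (k - j)) = 0 := by
  rw [val_choose_eq_sum (by omega) (by omega)]
  refine Finset.sum_eq_zero (fun i hi => ?_)
  have hir := Finset.mem_range.mp hi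
  have heq : n - j - 1 - i = n - (j + 1 + i) := by omega
  rw [heq]
  refine padicValNat.eq_zero_of_not_dvd (fun hd => ?_)
  have h3 : p ∣ n - (n - (j + 1 + i)) := Nat.dvd_sub hdvd hd
  rw [Nat.sub_sub_self (by omega)] at h3
  exact absurd (Nat.le_of_dvd (by omega) h3) (by omega)

lemma val_N3 (hdvd : p ∣ n - k) {j : ℕ} (hjk : j ≤ k) :
    padicValNat p (n.choose j) = 0 := by
  rw [val_choose_eq_sum (by omega) (by omega)]
  refine Finset.sum_eq_zero (fun i hi => ?_)
  have hir := Finset.mem_range.mp hi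
  refine padicValNat.eq_zero_of_not_dvd (fun hd => ?_)
  have h3 : p ∣ (n - i) - (n - k) := Nat.dvd_sub hd hdvd
  have heq : (n - i) - (n - k) = k - i := by omega
  rw [heq] at h3
  exact absurd (Nat.le_of_dvd (by omega) h3) (by omega)

lemma val_N4 (hdvd : p ∣ n - k) {j : ℕ} (hjk : j < k) :
    padicValNat p ((n - j - 1).choose (k - j)) = padicValNat p (n - k) := by
  rw [val_choose_eq_sum (by omega) (by omega)]
  rw [Finset.sum_eq_single_of_mem (k - j - 1) (Finset.mem_range.mpr (by omega))]
  · congr 1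
    omega
  · intro i hi hine
    have hir := Finset.mem_range.mp hi
    have heq : n - j - 1 - i = n - (j + 1 + i) := by omega
    rw [heq]
    refine padicValNat.eq_zero_of_not_dvd (fun hd => ?_)
    have h3 : p ∣ (n - (j + 1 + i)) - (n - k) := Nat.dvd_sub hd hdvd
    have heq2 : (n - (j + 1 + i)) - (n - k) = k - (j + 1 + i) := by omega
    rw [heq2] at h3
    exact absurd (Nat.le_of_dvd (by omega) h3) (by omega)

end vals

open Finset

lemma val_n'_lemma (n k n' : ℕ) (hk : 3 ≤ k) (hn : k + 1 ≤ n)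
    (hn'dvd : n' ∣ n * (n - k)) (hn'cop : Nat.Coprime n' (Nat.factorial k))
    (hn'max : ∀ m : ℕ, m ∣ n * (n - k) → Nat.Coprime m (Nat.factorial k) → m ≤ n')
    (p : ℕ) (hpmem : p ∈ n'.primeFactors) :
    p.Prime ∧ k < p ∧
      ((p ∣ n ∧ ¬ p ∣ (n - k) ∧ n'.factorization p = n.factorization p) ∨
       (p ∣ (n - k) ∧ ¬ p ∣ n ∧ n'.factorization p = (n - k).factorization p)) := by
  have hp : p.Prime := Nat.prime_of_mem_primeFactors hpmem
  have hpn' : p ∣ n' := Nat.dvd_of_mem_primeFactors hpmem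
  have hn'0 : n' ≠ 0 := by rintro rfl; simp at hpmem
  have hnk0 : n - k ≠ 0 := by omega
  have hn0 : n ≠ 0 := by omega
  have hprod0 : n * (n - k) ≠ 0 := by positivity
  have hpk : k < p := by
    by_contra hle
    have h1 : p ∣ Nat.factorial k := Nat.dvd_factorial hp.pos (by omega)
    have h2 : p ∣ Nat.gcd n' (Nat.factorial k) := Nat.dvd_gcd hpn' h1
    rw [hn'cop] at h2
    exact Nat.Prime.one_lt hp |>.ne' (Nat.le_antisymm (Nat.le_of_dvd one_pos h2) hp.one_lt.le ▸ rfl)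
  have hnotboth : ¬ (p ∣ n ∧ p ∣ (n - k)) := by
    rintro ⟨h1, h2⟩
    have h3 : p ∣ n - (n - k) := Nat.dvd_sub h1 h2
    rw [Nat.sub_sub_self (by omega)] at h3
    exact absurd (Nat.le_of_dvd (by omega) h3) (by omega)
  have hpor : p ∣ n ∨ p ∣ (n - k) :=
    (Nat.Prime.dvd_mul hp).mp (dvd_trans hpn' hn'dvd)
  -- n'.factorization p = (n * (n-k)).factorization p
  have hfac : n'.factorization p = (n * (n - k)).factorization p := by
    have hle : n'.factorization p ≤ (n * (n - k)).factorization p :=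
      (Nat.factorization_le_iff_dvd hn'0 hprod0).mpr hn'dvd p
    rcases Nat.lt_or_ge (n'.factorization p) ((n * (n - k)).factorization p) with hlt | hge
    · exfalso
      have hdvd2 : n' * p ∣ n * (n - k) := by
        refine (Nat.factorization_le_iff_dvd (Nat.mul_ne_zero hn'0 hp.ne_zero) hprod0).mp ?_
        intro q
        rw [Nat.factorization_mul hn'0 hp.ne_zero, Nat.Prime.factorization hp]
        simp only [Finsupp.coe_add, Pi.add_apply, Finsupp.single_apply]
        by_cases hq : p = q
        · subst hq; simpa using hlt
        · have := (Nat.factorization_le_iff_dvd hn'0 hprod0).mpr hn'dvd q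
          simp [hq]
          omega
      have hcop2 : Nat.Coprime (n' * p) (Nat.factorial k) := by
        refine Nat.Coprime.mul hn'cop ?_
        refine (Nat.Prime.coprime_iff_not_dvd hp).mpr (fun hd => ?_)
        exact absurd ((Nat.Prime.dvd_factorial hp).mp hd) (by omega)
      have := hn'max (n' * p) hdvd2 hcop2
      nlinarith [hp.two_le, Nat.one_le_iff_ne_zero.mpr hn'0]
    · omega
  rcases hpor with h | h
  · refine ⟨hp, hpk, Or.inl ⟨h, fun h2 => hnotboth ⟨h, h2⟩, ?_⟩⟩
    rw [hfac, Nat.factorization_mul hn0 hnk0]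
    simp only [Finsupp.coe_add, Pi.add_apply]
    rw [Nat.factorization_eq_zero_of_not_dvd (fun h2 => hnotboth ⟨h, h2⟩)]
    omega
  · refine ⟨hp, hpk, Or.inr ⟨h, fun h2 => hnotboth ⟨h2, h⟩, ?_⟩⟩
    rw [hfac, Nat.factorization_mul hn0 hnk0]
    simp only [Finsupp.coe_add, Pi.add_apply]
    rw [Nat.factorization_eq_zero_of_not_dvd (fun h2 => hnotboth ⟨h2, h⟩)]
    omega

open Finset Polynomial

set_option maxHeartbeats 1000000 in
open Polynomial in
theorem irreducible_of_d_eq_one (n k : ℕ) (hk : 3 ≤ k) (hkn : k ≤ n - 1)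
    (n' : ℕ) (hn'dvd : n' ∣ n * (n - k)) (hn'cop : Nat.Coprime n' (Nat.factorial k))
    (hn'max : ∀ m : ℕ, m ∣ n * (n - k) → Nat.Coprime m (Nat.factorial k) → m ≤ n')
    (hd : Nat.gcd k (n'.primeFactors.gcd fun p => n'.factorization p) = 1)
    (a : ℕ → ℤ) (ha0 : ∀ j ≤ k, a j ≠ 0)
    (ha : ∀ j ≤ k, ∀ q : ℕ, q.Prime → (q : ℤ) ∣ a j → q ≤ k) :
    Irreducible (∑ j ∈ Finset.range (k + 1),
      C ((a j : ℚ) * ((-1 : ℚ) ^ (k - j) * (n.choose j : ℚ) *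
        ((n - j - 1).choose (k - j) : ℚ))) * X ^ j) := by
  have hn : k + 1 ≤ n := by omega
  set e : ℕ → ℚ := fun j => (a j : ℚ) * ((-1 : ℚ) ^ (k - j) * (n.choose j : ℚ) *
    ((n - j - 1).choose (k - j) : ℚ)) with he
  set F : Polynomial ℚ := ∑ j ∈ Finset.range (k + 1), C (e j) * X ^ j with hF
  have hchoose2_pos : ∀ j ≤ k, 0 < (n - j - 1).choose (k - j) := by
    intro j hj
    exact Nat.choose_pos (by omega)
  have hene : ∀ j ≤ k, e j ≠ 0 := by
    intro j hj
    have h1 : (a j : ℚ) ≠ 0 := Int.cast_ne_zero.mpr (ha0 j hj)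
    have h2 : ((-1 : ℚ)) ^ (k - j) ≠ 0 := pow_ne_zero _ (by norm_num)
    have h3 : ((n.choose j : ℕ) : ℚ) ≠ 0 :=
      Nat.cast_ne_zero.mpr (Nat.choose_pos (by omega)).ne'
    have h4 : (((n - j - 1).choose (k - j) : ℕ) : ℚ) ≠ 0 :=
      Nat.cast_ne_zero.mpr (hchoose2_pos j hj).ne'
    rw [he]
    positivity
  have hcoeff : ∀ i, F.coeff i = if i < k + 1 then e i else 0 := by
    intro i
    rw [hF, Polynomial.finset_sum_coeff]
    simp only [Polynomial.coeff_C_mul, Polynomial.coeff_X_pow, mul_ite, mul_one, mul_zero]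
    rw [Finset.sum_ite_eq (Finset.range (k + 1)) i e]
    simp [Finset.mem_range]
  have hcoeffle : ∀ i ≤ k, F.coeff i = e i := by
    intro i hi; rw [hcoeff]; simp [Nat.lt_succ_of_le hi]
  have hF0 : F.coeff 0 ≠ 0 := by rw [hcoeffle 0 (by omega)]; exact hene 0 (by omega)
  have hFk : F.coeff k ≠ 0 := by rw [hcoeffle k le_rfl]; exact hene k le_rfl
  have hFne : F ≠ 0 := fun h => hF0 (by rw [h]; simp)
  have hdegF : F.natDegree = k := by
    refine le_antisymm ?_ (Polynomial.le_natDegree_of_ne_zero hFk)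
    rw [hF]
    refine (Polynomial.natDegree_sum_le _ _).trans ?_
    rw [Finset.fold_max_le]
    refine ⟨by omega, fun j hj => ?_⟩
    exact (Polynomial.natDegree_C_mul_X_pow_le _ _).trans (by
      simpa using Nat.lt_succ_iff.mp (Finset.mem_range.mp hj))
  have hsupp : ∀ i ∈ F.support, i ≤ k := by
    intro i hi
    have := Polynomial.le_natDegree_of_ne_zero (Polynomial.mem_support_iff.mp hi)
    omega
  -- valuation of coefficients
  have hvale : ∀ (p : ℕ), Fact p.Prime → k < p → ∀ i ≤ k,
      padicValRat p (e i) = (padicValNat p (n.choose i) : ℤ) +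
        (padicValNat p ((n - i - 1).choose (k - i)) : ℤ) := by
    intro p hp hpk i hi
    haveI := hp
    have h1 : (a i : ℚ) ≠ 0 := Int.cast_ne_zero.mpr (ha0 i hi)
    have h2 : ((-1 : ℚ)) ^ (k - i) ≠ 0 := pow_ne_zero _ (by norm_num)
    have h3 : ((n.choose i : ℕ) : ℚ) ≠ 0 :=
      Nat.cast_ne_zero.mpr (Nat.choose_pos (by omega)).ne'
    have h4 : (((n - i - 1).choose (k - i) : ℕ) : ℚ) ≠ 0 :=
      Nat.cast_ne_zero.mpr (hchoose2_pos i hi).ne'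
    rw [he]
    simp only []
    rw [padicValRat.mul h1 (by positivity), padicValRat.mul (mul_ne_zero h2 h3) h4,
      padicValRat.mul h2 h3]
    have hva : padicValRat p ((a i : ℚ)) = 0 := by
      rw [padicValRat.of_int]
      have : padicValInt p (a i) = 0 :=
        padicValInt.eq_zero_of_not_dvd (fun hdvd => absurd (ha i hi p hp.out hdvd) (by omega))
      exact_mod_cast this
    have hvsign : padicValRat p (((-1 : ℚ)) ^ (k - i)) = 0 := by
      rcases Nat.even_or_odd (k - i) with hpar | hpar
      · rw [hpar.neg_one_pow]; exact padicValRat.one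
      · rw [hpar.neg_one_pow, padicValRat.neg, padicValRat.one]
    rw [hva, hvsign, padicValRat.of_nat, padicValRat.of_nat]
    ring
  -- the main divisibility fact
  constructor
  · intro hu
    have := Polynomial.natDegree_eq_zero_of_isUnit hu
    rw [hdegF] at this
    omega
  · intro G H hGH
    have hGH' : F = G * H := hGH
    have hG0 : G ≠ 0 := fun h => hFne (by rw [hGH', h, zero_mul])
    have hH0 : H ≠ 0 := fun h => hFne (by rw [hGH', h, mul_zero])
    have hdegGH : G.natDegree + H.natDegree = k := by
      rw [← Polynomial.natDegree_mul hG0 hH0, ← hGH', hdegF]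
    -- divisibility for every prime factor of n'
    have hdvd_all : ∀ p ∈ n'.primeFactors, k ∣ (n'.factorization p) * G.natDegree := by
      intro p hpmem
      obtain ⟨hp, hpk, hcase⟩ := val_n'_lemma n k n' hk hn hn'dvd hn'cop hn'max p hpmem
      haveI : Fact p.Prime := ⟨hp⟩
      rcases hcase with ⟨hpn, hpnk, hfac⟩ | ⟨hpnk, hpn, hfac⟩
      · -- p ∣ n; s = -α
        set α : ℕ := padicValNat p n with hα
        have hval0 : padicValRat p (F.coeff 0) = 0 := by
          have h2 := val_N2 (n := n) hpk hn hpn (show (0:ℕ) ≤ k by omega)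
          rw [hcoeffle 0 (by omega), hvale p ‹_› hpk 0 (by omega), h2]
          simp
        have hvalj : ∀ i, 1 ≤ i → i ≤ k → padicValRat p (F.coeff i) = (α : ℤ) := by
          intro i h1 h2
          rw [hcoeffle i h2, hvale p ‹_› hpk i h2, val_N1 hpk hn hpn h1 h2,
            val_N2 hpk hn hpn h2]
          simp [hα]
        have hkey := key_dvd (p := p) k (-(α : ℤ)) G H (by omega)
          (by rw [← hGH']; exact hdegF) (by rw [← hGH']; exact hF0) ?_ ?_
        · rw [neg_mul] at hkey
          have h1 : (k : ℤ) ∣ (α : ℤ) * G.natDegree := dvd_neg.mp hkey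
          have h2 : (k : ℤ) ∣ ((α * G.natDegree : ℕ) : ℤ) := by push_cast; exact h1
          have hfac2 : n'.factorization p = α := by
            rw [hfac, hα, Nat.factorization_def _ hp]
          rw [hfac2]
          exact_mod_cast h2
        · intro i hi
          rw [← hGH'] at hi ⊢
          have hik := hsupp i hi
          rw [hval0]
          rcases Nat.eq_zero_or_pos i with rfl | hipos
          · rw [hval0]; simp
          · rw [hvalj i hipos hik]
            have h5 : (i : ℤ) ≤ k := by exact_mod_cast hik
            push_cast; nlinarith [Int.natCast_nonneg α]
        · intro i hi
          rw [← hGH'] at hi ⊢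
          have hik := hsupp i hi
          rw [hvalj k (by omega) le_rfl]
          rcases Nat.eq_zero_or_pos i with rfl | hipos
          · rw [hval0]
            push_cast; nlinarith [Int.natCast_nonneg α]
          · rw [hvalj i hipos hik]
            have h5 : (i : ℤ) ≤ k := by exact_mod_cast hik
            push_cast; nlinarith [Int.natCast_nonneg α]
      · -- p ∣ n - k; s = β
        set β : ℕ := padicValNat p (n - k) with hβ
        have hvalk : padicValRat p (F.coeff k) = 0 := by
          rw [hcoeffle k le_rfl, hvale p ‹_› hpk k le_rfl, val_N3 hpk hn hpnk le_rfl]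
          simp [Nat.choose_self]
        have hvalj : ∀ i, i < k → padicValRat p (F.coeff i) = (β : ℤ) := by
          intro i h2
          rw [hcoeffle i (by omega), hvale p ‹_› hpk i (by omega),
            val_N3 hpk hn hpnk (by omega), val_N4 hpk hn hpnk h2]
          simp [hβ]
        have hkey := key_dvd (p := p) k ((β : ℤ)) G H (by omega)
          (by rw [← hGH']; exact hdegF) (by rw [← hGH']; exact hF0) ?_ ?_
        · have h2 : (k : ℤ) ∣ ((β * G.natDegree : ℕ) : ℤ) := by push_cast; exact hkey
          have hfac2 : n'.factorization p = β := by
            rw [hfac, hβ, Nat.factorization_def _ hp]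
          rw [hfac2]
          exact_mod_cast h2
        · intro i hi
          rw [← hGH'] at hi ⊢
          have hik := hsupp i hi
          rcases Nat.lt_or_ge i k with hilt | hige
          · rw [hvalj 0 (by omega), hvalj i hilt]
            have h5 : (0 : ℤ) ≤ (i : ℤ) := by positivity
            push_cast; nlinarith [Int.natCast_nonneg β]
          · have : i = k := by omega
            subst this
            rw [hvalj 0 (by omega), hvalk]
            push_cast; nlinarith [Int.natCast_nonneg β]
        · intro i hi
          rw [← hGH'] at hi ⊢
          have hik := hsupp i hi
          rcases Nat.lt_or_ge i k with hilt | hige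
          · rw [hvalk, hvalj i hilt]
            push_cast
            nlinarith [Int.natCast_nonneg β, (by exact_mod_cast hik : (i:ℤ) ≤ k)]
          · have : i = k := by omega
            subst this
            push_cast
            nlinarith [Int.natCast_nonneg β]
    -- combine
    have hgcd : k ∣ (n'.primeFactors.gcd fun p => n'.factorization p) * G.natDegree := by
      have hgm := Finset.gcd_mul_right (s := n'.primeFactors)
        (f := fun p => n'.factorization p) (a := G.natDegree)
      simp only [normalize_eq] at hgm
      rw [← hgm]
      exact Finset.dvd_gcd (fun p hp => hdvd_all p hp)
    have hcop : Nat.Coprime k (n'.primeFactors.gcd fun p => n'.factorization p) := hd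
    have hdvdm : k ∣ G.natDegree := hcop.dvd_of_dvd_mul_left hgcd
    have hmle : G.natDegree ≤ k := by omega
    rcases Nat.eq_zero_or_pos G.natDegree with hm0 | hmpos
    · left
      rw [Polynomial.isUnit_iff_degree_eq_zero, Polynomial.degree_eq_natDegree hG0, hm0]
      rfl
    · right
      have : G.natDegree = k := Nat.le_antisymm hmle (Nat.le_of_dvd hmpos hdvdm)
      have hH : H.natDegree = 0 := by omega
      rw [Polynomial.isUnit_iff_degree_eq_zero, Polynomial.degree_eq_natDegree hH0, hH]
      rfl
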